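/- arXiv:2006.07705 — 3 statements merged into one kernel-verified Lean document; each statement's English description precedes it below -/
import Mathlib

section
/- For every integer k ≥ 1, as formal power series: (1/(q;q)_∞) Σ_{n=0}^{k-1} (-1)^n q^{n(n+1)/2} = Σ_{n=0}^∞ q^{n(n+1)}/((q;q)_n)^2 + (-1)^{k-1} q^{k(k+1)/2} Σ_{n=0}^∞ q^{n(n+k+1)} / ((q;q)_n (q;q)_{n+k}). -/
open PowerSeries Finset

noncomputable instance : TopologicalSpace (PowerSeries ℚ) :=
  inferInstanceAs (TopologicalSpace ((Unit →₀ ℕ) → ℚ))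

/-- The rank of a partition: largest part minus number of parts. -/
def rank {n : ℕ} (P : n.Partition) : ℤ :=
  (P.parts.sup : ℤ) - (Multiset.card P.parts : ℤ)

/-- The crank of a partition. -/
def crank {n : ℕ} (P : n.Partition) : ℤ :=
  if P.parts.count 1 = 0 then (P.parts.sup : ℤ)
  else ((P.parts.filter (fun x => P.parts.count 1 < x)).card : ℤ) - (P.parts.count 1 : ℤ)

/-- The number of partitions of `n`. -/
noncomputable def p (n : ℕ) : ℕ := Nat.card n.Partition

/-- `p` extended to the integers by `0` on negatives. -/
noncomputable def pz (m : ℤ) : ℕ := if 0 ≤ m then p m.toNat else 0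

/-- The number of partitions of `n` with non-negative rank. -/
noncomputable def Nrank (n : ℕ) : ℕ := Nat.card {P : n.Partition // 0 ≤ rank P}

/-- The number of partitions of `n` with positive rank. -/
noncomputable def Rrank (n : ℕ) : ℕ := Nat.card {P : n.Partition // 0 < rank P}

/-- The number of Garden of Eden partitions of `n` (rank at most `-2`). -/
noncomputable def gePart (n : ℕ) : ℕ := Nat.card {P : n.Partition // rank P ≤ -2}

/-- The number of partitions of `n` with non-negative crank. -/
noncomputable def Ccrank (n : ℕ) : ℕ := Nat.card {P : n.Partition // 0 ≤ crank P}

/-- The number of partitions of `n` with positive crank. -/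
noncomputable def Dcrank (n : ℕ) : ℕ := Nat.card {P : n.Partition // 0 < crank P}

/-- The number of partitions of `n` in which `k` is the least positive integer that is not a
part and there are more parts greater than `k` than parts less than `k`. -/
noncomputable def Mk (k n : ℕ) : ℕ := Nat.card {P : n.Partition //
  (∀ i, 1 ≤ i → i < k → (i : ℕ) ∈ P.parts) ∧ (k : ℕ) ∉ P.parts ∧
  (P.parts.filter (fun x => x < k)).card < (P.parts.filter (fun x => k < x)).card}

/-- The number of partitions of `n` with no part divisible by 3. -/
noncomputable def p3 (n : ℕ) : ℕ := Nat.card {P : n.Partition // ∀ x ∈ P.parts, ¬ (3 ∣ x)}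

/-- The infinite product `(q;q)_∞` as a formal power series. -/
noncomputable def E : PowerSeries ℚ := ∏' i : ℕ, (1 - (X : PowerSeries ℚ) ^ (i + 1))

/-- The finite product `(q;q)_n` as a formal power series. -/
noncomputable def qPoch (n : ℕ) : PowerSeries ℚ :=
  ∏ i ∈ range n, (1 - (X : PowerSeries ℚ) ^ (i + 1))

instance : T2Space (PowerSeries ℚ) :=
  inferInstanceAs (T2Space ((Unit →₀ ℕ) → ℚ))

section Infra

lemma eval_eq_coeff (g : PowerSeries ℚ) (x : Unit →₀ ℕ) :
    g x = coeff (x ()) g := by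
  rw [PowerSeries.coeff, MvPowerSeries.coeff_apply]
  congr 1
  exact (Finsupp.unique_single x).trans rfl

lemma coeffXmul (g : PowerSeries ℚ) (e d : ℕ) :
    coeff d (X ^ e * g) = if e ≤ d then coeff (d - e) g else 0 := by
  rw [mul_comm, PowerSeries.coeff_mul_X_pow']

lemma coeff_X_pow_mul_of_lt (g : PowerSeries ℚ) {e d : ℕ} (h : d < e) :
    coeff d (X ^ e * g) = 0 := by
  rw [coeffXmul, if_neg (by omega)]

lemma coeff_one_sub_X_pow_mul (g : PowerSeries ℚ) (e d : ℕ) :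
    coeff d ((1 - X ^ e) * g) = coeff d g - coeff d (X ^ e * g) := by
  rw [sub_mul, one_mul, map_sub]

lemma hasSum_mk (f : ℕ → PowerSeries ℚ) (hf : ∀ d n : ℕ, d < n → coeff d (f n) = 0) :
    HasSum f (PowerSeries.mk fun d => ∑ n ∈ range (d + 1), coeff d (f n)) := by
  rw [HasSum]
  refine tendsto_pi_nhds.2 fun x => ?_
  set d := x ()
  have key : ∀ s : Finset ℕ, range (d+1) ≤ s →
      (∑ n ∈ s, f n) x =
        (PowerSeries.mk fun d => ∑ n ∈ range (d + 1), coeff d (f n) : PowerSeries ℚ) x := by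
    intro s hs
    rw [eval_eq_coeff (∑ n ∈ s, f n) x,
      eval_eq_coeff (PowerSeries.mk fun d => ∑ n ∈ range (d + 1), coeff d (f n)) x,
      PowerSeries.coeff_mk, map_sum]
    refine (Finset.sum_subset hs ?_).symm
    intro n _ hn
    exact hf d n (by simpa using hn)
  refine Filter.Tendsto.congr' ?_ tendsto_const_nhds
  filter_upwards [Filter.eventually_ge_atTop (range (d+1))] with s hs
  exact (key s hs).symm

lemma coeff_tsum (f : ℕ → PowerSeries ℚ) (hf : ∀ d n : ℕ, d < n → coeff d (f n) = 0) (d : ℕ) :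
    coeff d (∑' n, f n) = ∑ n ∈ range (d + 1), coeff d (f n) := by
  rw [(hasSum_mk f hf).tsum_eq, PowerSeries.coeff_mk]

lemma coeff_X_pow_mul_tsum (f : ℕ → PowerSeries ℚ)
    (hf : ∀ d n : ℕ, d < n → coeff d (f n) = 0) (e d : ℕ) :
    coeff d (X ^ e * ∑' n, f n) = ∑ n ∈ range (d + 1), coeff d (X ^ e * f n) := by
  have hterm : ∀ n, coeff d (X ^ e * f n) = if e ≤ d then coeff (d - e) (f n) else 0 :=
    fun n => coeffXmul _ _ _
  by_cases he : e ≤ d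
  · rw [coeffXmul, if_pos he, coeff_tsum f hf,
      Finset.sum_congr rfl fun n _ => (hterm n).trans (if_pos he)]
    refine Finset.sum_subset (Finset.range_subset_range.2 (by omega)) fun n _ hn => ?_
    exact hf _ _ (by simp only [Finset.mem_range] at hn ⊢; omega)
  · rw [coeffXmul, if_neg he]
    simp [hterm, if_neg he]

lemma coeff_prod_inter (d : ℕ) (s : Finset ℕ) :
    ∀ e ≤ d, coeff e (∏ i ∈ s, (1 - (X : PowerSeries ℚ) ^ (i + 1))) =
      coeff e (∏ i ∈ s ∩ range d, (1 - (X : PowerSeries ℚ) ^ (i + 1))) := by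
  induction s using Finset.induction_on with
  | empty => simp
  | @insert a s ha ih =>
    intro e he
    rw [Finset.prod_insert ha]
    by_cases had : a ∈ range d
    · rw [Finset.insert_inter_of_mem had, Finset.prod_insert (by simp [ha]),
        coeff_one_sub_X_pow_mul, coeff_one_sub_X_pow_mul, ih e he,
        coeffXmul, coeffXmul]
      by_cases h1 : a + 1 ≤ e
      · rw [if_pos h1, if_pos h1, ih _ (by omega)]
      · rw [if_neg h1, if_neg h1]
    · have had' : d ≤ a := by simpa using had
      rw [Finset.insert_inter_of_notMem had, coeff_one_sub_X_pow_mul,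
        coeffXmul, if_neg (by omega), sub_zero, ih e he]

lemma coeff_qPoch_stable {d N : ℕ} (h : d ≤ N) : coeff d (qPoch N) = coeff d (qPoch d) := by
  induction N with
  | zero => have : d = 0 := by omega
            subst this; rfl
  | succ N ih =>
    rcases Nat.lt_or_ge d (N + 1) with hd | hd
    · have : qPoch (N + 1) = qPoch N * (1 - X ^ (N + 1)) := Finset.prod_range_succ _ _
      rw [this, mul_comm, coeff_one_sub_X_pow_mul, coeffXmul, if_neg (by omega), sub_zero]
      rcases Nat.lt_or_ge d N with h2 | h2
      · exact ih (by omega)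
      · have : d = N := by omega
        subst this; rfl
    · have : d = N + 1 := by omega
      subst this; rfl

lemma hasProd_E : HasProd (fun i : ℕ => 1 - (X : PowerSeries ℚ) ^ (i + 1))
    (PowerSeries.mk fun d => coeff d (qPoch d)) := by
  rw [HasProd]
  refine tendsto_pi_nhds.2 fun x => ?_
  set d := x ()
  refine Filter.Tendsto.congr' ?_ tendsto_const_nhds
  filter_upwards [Filter.eventually_ge_atTop (range d)] with s hs
  rw [eval_eq_coeff (∏ i ∈ s, (1 - (X:PowerSeries ℚ) ^ (i+1))) x,
    eval_eq_coeff (PowerSeries.mk fun d => coeff d (qPoch d)) x, PowerSeries.coeff_mk,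
    coeff_prod_inter d s (x ()) le_rfl, Finset.inter_eq_right.2 hs]
  rfl

lemma coeff_E {d N : ℕ} (h : d ≤ N) : coeff d E = coeff d (qPoch N) := by
  rw [E, hasProd_E.tprod_eq, PowerSeries.coeff_mk, coeff_qPoch_stable h]

lemma constCoeff_qPoch (n : ℕ) : constantCoeff (qPoch n) = 1 := by
  rw [qPoch, map_prod]
  simp

lemma qPoch_mul_ne (n m : ℕ) : constantCoeff (qPoch n * qPoch m) ≠ 0 := by
  rw [map_mul, constCoeff_qPoch, constCoeff_qPoch]
  norm_num

lemma ps_inv_mul (a : PowerSeries ℚ) (ha : constantCoeff a ≠ 0) : a⁻¹ * a = 1 := by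
  rw [mul_comm]; exact PowerSeries.mul_inv_cancel a ha

lemma lemmaA (n m : ℕ) :
    (1 - (X : PowerSeries ℚ) ^ (n + m + 1)) * (qPoch n * qPoch (n + m + 1))⁻¹ =
      (qPoch n * qPoch (n + m))⁻¹ := by
  have h1 : qPoch (n + m + 1) = qPoch (n + m) * (1 - X ^ (n + m + 1)) :=
    Finset.prod_range_succ _ _
  have hne : (qPoch n * qPoch (n + m)) ≠ 0 := fun h => qPoch_mul_ne n (n+m) (by rw [h, map_zero])
  apply mul_right_cancel₀ hne
  rw [ps_inv_mul _ (qPoch_mul_ne n (n+m))]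
  calc (1 - (X : PowerSeries ℚ) ^ (n + m + 1)) * (qPoch n * qPoch (n + m + 1))⁻¹ *
        (qPoch n * qPoch (n + m))
      = (qPoch n * qPoch (n + m + 1))⁻¹ * (qPoch n * (qPoch (n + m) * (1 - X ^ (n + m + 1)))) := by
        ring
    _ = 1 := by rw [← h1]; exact ps_inv_mul _ (qPoch_mul_ne n (n+m+1))

lemma lemmaB (n m : ℕ) :
    (1 - (X : PowerSeries ℚ) ^ (n + 1)) * (qPoch (n + 1) * qPoch m)⁻¹ =
      (qPoch n * qPoch m)⁻¹ := by
  have h1 : qPoch (n + 1) = qPoch n * (1 - X ^ (n + 1)) := Finset.prod_range_succ _ _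
  have hne : (qPoch n * qPoch m) ≠ 0 := fun h => qPoch_mul_ne n m (by rw [h, map_zero])
  apply mul_right_cancel₀ hne
  rw [ps_inv_mul _ (qPoch_mul_ne n m)]
  calc (1 - (X : PowerSeries ℚ) ^ (n + 1)) * (qPoch (n + 1) * qPoch m)⁻¹ *
        (qPoch n * qPoch m)
      = (qPoch (n + 1) * qPoch m)⁻¹ * ((qPoch n * (1 - X ^ (n + 1))) * qPoch m) := by ring
    _ = 1 := by rw [← h1]; exact ps_inv_mul _ (qPoch_mul_ne (n+1) m)

end Infra

noncomputable def Vf (j m n : ℕ) : PowerSeries ℚ :=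
  X ^ (j * n + n * n) * (qPoch n * qPoch (n + m))⁻¹

noncomputable def V (j m : ℕ) : PowerSeries ℚ := ∑' n, Vf j m n

lemma Vf_vanish (j m : ℕ) : ∀ d n : ℕ, d < n → coeff d (Vf j m n) = 0 := by
  intro d n h
  refine coeff_X_pow_mul_of_lt _ ?_
  nlinarith

lemma dagger_term (j m n : ℕ) :
    Vf j (m + 1) n = Vf j m n + X ^ (m + 1) * Vf (j + 1) (m + 1) n := by
  have hA := lemmaA n m
  rw [Vf, Vf, Vf, show n + (m + 1) = n + m + 1 from rfl, ← hA]
  ring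

lemma star_term (j m n : ℕ) :
    Vf j m (n + 1) = Vf (j + 1) m (n + 1) + X ^ (j + 1) * Vf (j + 2) (m + 1) n := by
  have hB := lemmaB n (n + m + 1)
  rw [Vf, Vf, Vf, show n + 1 + m = n + m + 1 from by omega,
    show n + (m + 1) = n + m + 1 from rfl, ← hB]
  ring

lemma dagger (j m : ℕ) : V j (m + 1) = V j m + X ^ (m + 1) * V (j + 1) (m + 1) := by
  ext d
  rw [V, V, V, map_add, coeff_tsum _ (Vf_vanish j (m+1)) d, coeff_tsum _ (Vf_vanish j m) d,
    coeff_X_pow_mul_tsum _ (Vf_vanish (j+1) (m+1)) (m+1) d, ← Finset.sum_add_distrib]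
  exact Finset.sum_congr rfl fun n _ => by rw [dagger_term, map_add]

lemma star (j m : ℕ) : V j m = V (j + 1) m + X ^ (j + 1) * V (j + 2) (m + 1) := by
  ext d
  rw [V, V, V, map_add, coeff_tsum _ (Vf_vanish j m) d, coeff_tsum _ (Vf_vanish (j+1) m) d,
    coeff_X_pow_mul_tsum _ (Vf_vanish (j+2) (m+1)) (j+1) d]
  rw [Finset.sum_range_succ' (fun n => coeff d (Vf j m n)) d,
    Finset.sum_range_succ' (fun n => coeff d (Vf (j+1) m n)) d,
    Finset.sum_range_succ (fun n => coeff d (X ^ (j+1) * Vf (j+2) (m+1) n)) d]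
  have hz : coeff d (X ^ (j + 1) * Vf (j + 2) (m + 1) d) = 0 := by
    rw [coeffXmul]
    split
    · exact Vf_vanish _ _ _ _ (by omega)
    · rfl
  have hz0 : Vf j m 0 = Vf (j + 1) m 0 := by
    rw [Vf, Vf]; ring_nf
  have hterm : ∀ n, coeff d (Vf j m (n + 1)) =
      coeff d (Vf (j + 1) m (n + 1)) + coeff d (X ^ (j + 1) * Vf (j + 2) (m + 1) n) :=
    fun n => by rw [star_term, map_add]
  rw [hz, add_zero, hz0, Finset.sum_congr rfl fun n _ => hterm n, Finset.sum_add_distrib]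
  ring

lemma chain (m : ℕ) : V m m = V (m + 1) (m + 1) := by
  have h1 := star m m
  have h2 := dagger (m + 1) m
  rw [h1, h2]

lemma chain' (m M : ℕ) (h : m ≤ M) : V m m = V M M := by
  induction M with
  | zero => have : m = 0 := by omega
            subst this; rfl
  | succ M ih =>
    rcases Nat.lt_or_ge m (M + 1) with hd | hd
    · rw [ih (by omega), chain]
    · have : m = M + 1 := by omega
      subst this; rfl

lemma inv_agree {a b : PowerSeries ℚ} (ha : constantCoeff a ≠ 0)
    (d : ℕ) (hab : ∀ e ≤ d, coeff e a = coeff e b) :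
    ∀ e ≤ d, coeff e a⁻¹ = coeff e b⁻¹ := by
  have hb : constantCoeff b ≠ 0 := by
    rw [← PowerSeries.coeff_zero_eq_constantCoeff_apply, ← hab 0 (by omega),
      PowerSeries.coeff_zero_eq_constantCoeff_apply]
    exact ha
  intro e
  induction e using Nat.strong_induction_on with
  | _ e ih =>
    intro he
    rw [PowerSeries.coeff_inv, PowerSeries.coeff_inv]
    have hc : constantCoeff a = constantCoeff b := by
      rw [← PowerSeries.coeff_zero_eq_constantCoeff_apply,
        ← PowerSeries.coeff_zero_eq_constantCoeff_apply b]
      exact hab 0 (by omega)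
    rw [hc]
    split
    · rfl
    · congr 1
      refine Finset.sum_congr rfl fun x hx => ?_
      rw [HasAntidiagonal.mem_antidiagonal] at hx
      split
      · next h2 =>
          rw [hab x.1 (by omega), ih x.2 (by omega) (by omega)]
      · rfl

lemma stab (d m : ℕ) (h : d ≤ m) : coeff d (V m m) = coeff d E⁻¹ := by
  rw [V, coeff_tsum _ (Vf_vanish m m) d]
  have hz : ∀ n ∈ range (d + 1), n ≠ 0 → coeff d (Vf m m n) = 0 := by
    intro n _ hn
    refine coeff_X_pow_mul_of_lt _ ?_
    have h1 : 1 ≤ n := by omega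
    calc d < m + 1 := by omega
    _ ≤ m * n + n * n := by nlinarith
  rw [Finset.sum_eq_single_of_mem 0 (by simp) (fun n hn h0 => hz n hn h0)]
  have h0 : Vf m m 0 = (qPoch m)⁻¹ := by
    rw [Vf]
    simp [qPoch]
  rw [h0]
  have hE : constantCoeff E ≠ 0 := by
    rw [← PowerSeries.coeff_zero_eq_constantCoeff_apply, coeff_E (Nat.zero_le m),
      PowerSeries.coeff_zero_eq_constantCoeff_apply, constCoeff_qPoch]
    norm_num
  exact (inv_agree hE d (fun e hd => coeff_E (by omega)) d le_rfl).symm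

lemma dur (m : ℕ) : V m m = E⁻¹ := by
  ext d
  rw [chain' m (max m d) (le_max_left _ _), stab d _ (le_max_right _ _)]

lemma key (k : ℕ) : V (k + 1) k + X ^ (k + 1) * V (k + 2) (k + 1) = E⁻¹ := by
  rw [← dagger (k + 1) k, dur]

lemma tsum1 : (∑' n : ℕ, (X : PowerSeries ℚ) ^ (n * (n + 1)) * ((qPoch n) ^ 2)⁻¹) = V 1 0 := by
  rw [V]
  refine tsum_congr fun n => ?_
  rw [Vf, show 1 * n + n * n = n * (n + 1) from by ring, show qPoch (n + 0) = qPoch n from rfl,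
    ← sq]

lemma tsum2 (k : ℕ) :
    (∑' n : ℕ, (X : PowerSeries ℚ) ^ (n * (n + k + 1)) * (qPoch n * qPoch (n + k))⁻¹) =
      V (k + 1) k := by
  rw [V]
  refine tsum_congr fun n => ?_
  rw [Vf, show (k + 1) * n + n * n = n * (n + k + 1) from by ring]

theorem stmt12 (k : ℕ) (hk : 1 ≤ k) :
    E⁻¹ * (∑ n ∈ range k, ((-1 : ℚ) ^ n) • (X : PowerSeries ℚ) ^ (n * (n + 1) / 2)) =
      (∑' n : ℕ, (X : PowerSeries ℚ) ^ (n * (n + 1)) * ((qPoch n) ^ 2)⁻¹) +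
        ((-1 : ℚ) ^ (k - 1)) • ((X : PowerSeries ℚ) ^ (k * (k + 1) / 2) *
          ∑' n : ℕ, (X : PowerSeries ℚ) ^ (n * (n + k + 1)) * (qPoch n * qPoch (n + k))⁻¹) := by
  induction k, hk using Nat.le_induction with
  | base =>
    have h := key 0
    norm_num at h
    rw [tsum1, tsum2 1]
    norm_num
    exact h.symm
  | succ k hk ih =>
    rw [tsum1, tsum2 (k + 1)]
    rw [tsum1, tsum2 k] at ih
    have hT : (k + 1) * (k + 1 + 1) / 2 = k * (k + 1) / 2 + (k + 1) := by
      obtain ⟨t, ht⟩ := Nat.even_mul_succ_self k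
      have h2 : (k + 1) * (k + 1 + 1) = k * (k + 1) + 2 * (k + 1) := by ring
      rw [h2, ht]
      omega
    have hsign : ((-1 : ℚ)) ^ (k - 1) = -((-1 : ℚ)) ^ k := by
      conv_rhs => rw [show k = (k - 1) + 1 from by omega]
      rw [pow_succ]; ring
    rw [Finset.sum_range_succ, mul_add, ih, hsign, show k + 1 - 1 = k from rfl, hT, pow_add]
    simp only [smul_eq_C_mul, map_neg]
    linear_combination (-(PowerSeries.C ((-1 : ℚ) ^ k) * X ^ (k * (k + 1) / 2))) * (key k)
end

section
/- For each m, the coefficient of q^m in (1/(q;q)_∞) Σ_{n=1}^∞ (-1)^{n-1} q^{3n(n+1)/2} equals ge(m), the number of partitions of m whose rank is at most -2 (Garden of Eden partitions). -/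
open PowerSeries Finset

namespace GEAux
open Filter Topology


lemma my_t2 : T2Space (PowerSeries ℚ) := inferInstanceAs (T2Space ((Unit →₀ ℕ) → ℚ))

lemma coord_eq_coeff (d : Unit →₀ ℕ) (φ : PowerSeries ℚ) :
    φ d = coeff (d ()) φ := by
  have : d = Finsupp.single () (d ()) := Finsupp.ext fun u => by cases u; simp
  conv_lhs => rw [this]
  rfl

lemma hasProd_of_coeff (f : ℕ → PowerSeries ℚ) (L : PowerSeries ℚ)
    (h : ∀ d : ℕ, ∀ s : Finset ℕ, range (d + 1) ⊆ s →
      coeff d (∏ i ∈ s, f i) = coeff d L) : HasProd f L := by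
  rw [HasProd]
  have : Tendsto (fun s : Finset ℕ => (fun d : Unit →₀ ℕ => (∏ i ∈ s, f i) d))
      atTop (𝓝 (fun d : Unit →₀ ℕ => L d)) := by
    rw [tendsto_pi_nhds]
    intro d
    apply Tendsto.congr' _ (tendsto_const_nhds (x := L d))
    filter_upwards [Filter.eventually_ge_atTop (range (d () + 1))] with s hs
    exact (coord_eq_coeff d L).trans (((h _ s hs).symm).trans (coord_eq_coeff d _).symm)
  exact this

lemma hasSum_of_coeff (f : ℕ → PowerSeries ℚ) (L : PowerSeries ℚ)
    (h : ∀ d : ℕ, ∀ s : Finset ℕ, range (d + 1) ⊆ s →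
      coeff d (∑ i ∈ s, f i) = coeff d L) : HasSum f L := by
  rw [HasSum]
  have : Tendsto (fun s : Finset ℕ => (fun d : Unit →₀ ℕ => (∑ i ∈ s, f i) d))
      atTop (𝓝 (fun d : Unit →₀ ℕ => L d)) := by
    rw [tendsto_pi_nhds]
    intro d
    apply Tendsto.congr' _ (tendsto_const_nhds (x := L d))
    filter_upwards [Filter.eventually_ge_atTop (range (d () + 1))] with s hs
    exact (coord_eq_coeff d L).trans (((h _ s hs).symm).trans (coord_eq_coeff d _).symm)
  exact this

lemma coeff_mul_one_sub_pow (n k : ℕ) (h : n < k) (A : PowerSeries ℚ) :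
    coeff n (A * (1 - X ^ k)) = coeff n A := by
  rw [mul_sub, mul_one, map_sub, coeff_mul_X_pow', if_neg (by omega), sub_zero]

lemma coeff_mul_prod_one_sub (n : ℕ) (A : PowerSeries ℚ) (t : Finset ℕ)
    (ht : ∀ i ∈ t, n < i + 1) :
    coeff n (A * ∏ i ∈ t, (1 - X ^ (i + 1))) = coeff n A := by
  induction t using Finset.induction with
  | empty => simp
  | @insert a t ha ih =>
    rw [Finset.prod_insert ha,
      show A * ((1 - X ^ (a+1)) * ∏ x ∈ t, (1 - X ^ (x+1))) =
        (A * ∏ x ∈ t, (1 - X ^ (x+1))) * (1 - X ^ (a+1)) from by ring,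
      coeff_mul_one_sub_pow n (a+1) (ht a (mem_insert_self a t)),
      ih (fun i hi => ht i (mem_insert_of_mem hi))]

lemma coeff_prod_stable (n : ℕ) (s : Finset ℕ) (hs : range (n + 1) ⊆ s) :
    coeff n (∏ i ∈ s, (1 - (X : PowerSeries ℚ) ^ (i + 1))) = coeff n (qPoch (n + 1)) := by
  rw [← Finset.union_sdiff_of_subset hs, Finset.prod_union (Finset.disjoint_sdiff), qPoch]
  exact coeff_mul_prod_one_sub n _ _ (fun i hi => by
    have := (Finset.mem_sdiff.1 hi).2
    simp only [mem_range] at this; omega)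

lemma hasProd_E : HasProd (fun i => 1 - (X : PowerSeries ℚ) ^ (i + 1))
    (PowerSeries.mk fun d => coeff d (qPoch (d + 1))) := by
  apply hasProd_of_coeff
  intro d s hs
  rw [coeff_prod_stable d s hs, coeff_mk]

lemma coeff_E (n N : ℕ) (h : n < N) : coeff n E = coeff n (qPoch N) := by
  have h1 : E = PowerSeries.mk fun d => coeff d (qPoch (d + 1)) := by
    have := my_t2
    exact hasProd_E.tprod_eq
  rw [h1, coeff_mk, ← coeff_prod_stable n (range N) (by
    intro x hx; simp only [mem_range] at *; omega)]
  rfl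
  

open scoped Classical

/-- indicator series, copied from Archive. -/
noncomputable def indicatorSeries (α : Type*) [Semiring α] (s : Set ℕ) : PowerSeries α :=
  PowerSeries.mk fun n => if n ∈ s then 1 else 0

theorem coeff_indicator (s : Set ℕ) {α : Type*} [Semiring α] (n : ℕ) :
    coeff n (indicatorSeries α s) = if n ∈ s then 1 else 0 :=
  coeff_mk _ _

theorem constantCoeff_indicator (s : Set ℕ) {α : Type*} [Semiring α] :
    constantCoeff (indicatorSeries α s) = if 0 ∈ s then 1 else 0 :=
  rfl

theorem num_series' {α : Type*} [Field α] (i : ℕ) :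
    (1 - (X : PowerSeries α) ^ (i + 1))⁻¹ = indicatorSeries α {k | i + 1 ∣ k} := by
  rw [PowerSeries.inv_eq_iff_mul_eq_one]
  · ext n
    cases n with
    | zero => simp [mul_sub, zero_pow, constantCoeff_indicator]
    | succ n =>
      simp only [coeff_one, if_false, mul_sub, mul_one, coeff_indicator,
        LinearMap.map_sub, reduceCtorEq]
      simp_rw [coeff_mul, coeff_X_pow, coeff_indicator, @boole_mul _ _ _ _]
      letI : ∀ x : ℕ, Decidable (x ∈ {k | i + 1 ∣ k}) := fun _ => Classical.propDecidable _
      erw [sum_ite, sum_ite]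
      simp_rw [@filter_filter _ _ _ _ _, sum_const_zero, add_zero, sum_const, nsmul_eq_mul, mul_one,
        sub_eq_iff_eq_add, zero_add]
      symm
      split_ifs with h
      · suffices #{a ∈ antidiagonal (n + 1) | i + 1 ∣ a.fst ∧ a.snd = i + 1} = 1 by
          simp only [Set.mem_setOf_eq]; convert congr_arg ((↑) : ℕ → α) this; norm_cast
        rw [card_eq_one]
        cases' h with p hp
        refine ⟨((i + 1) * (p - 1), i + 1), ?_⟩
        ext ⟨a₁, a₂⟩
        simp only [mem_filter, Prod.mk_inj, HasAntidiagonal.mem_antidiagonal, mem_singleton]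
        constructor
        · rintro ⟨a_left, ⟨a, rfl⟩, rfl⟩
          refine ⟨?_, rfl⟩
          rw [Nat.mul_sub_left_distrib, ← hp, ← a_left, mul_one, Nat.add_sub_cancel]
        · rintro ⟨rfl, rfl⟩
          match p with
          | 0 => rw [mul_zero] at hp; cases hp
          | p + 1 => rw [hp]; simp [mul_add]
      · suffices #{a ∈ antidiagonal (n + 1) | i + 1 ∣ a.fst ∧ a.snd = i + 1} = 0 by
          simp only [Set.mem_setOf_eq]; convert congr_arg ((↑) : ℕ → α) this; norm_cast
        rw [card_eq_zero]
        apply eq_empty_of_forall_notMem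
        simp only [Prod.forall, mem_filter, not_and, HasAntidiagonal.mem_antidiagonal]
        rintro _ h₁ h₂ ⟨a, rfl⟩ rfl
        apply h
        simp [← h₂]
  · simp [zero_pow]

theorem partialGF_prop (α : Type*) [CommSemiring α] (n : ℕ) (s : Finset ℕ) (hs : ∀ i ∈ s, 0 < i)
    (c : ℕ → Set ℕ) (hc : ∀ i, i ∉ s → 0 ∈ c i) :
    #{p : n.Partition | (∀ j, p.parts.count j ∈ c j) ∧ ∀ j ∈ p.parts, j ∈ s} =
      coeff n (∏ i ∈ s, indicatorSeries α ((· * i) '' c i)) := by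
  simp_rw [coeff_prod, coeff_indicator, prod_boole, sum_boole]
  apply congr_arg
  simp only [mem_univ, forall_true_left, not_and, not_forall, exists_prop,
    Set.mem_image, not_exists]
  set φ : (a : Nat.Partition n) →
    a ∈ filter (fun p ↦ (∀ (j : ℕ), Multiset.count j p.parts ∈ c j) ∧ ∀ j ∈ p.parts, j ∈ s) univ →
    ℕ →₀ ℕ := fun p _ => {
      toFun := fun i => Multiset.count i p.parts • i
      support := Finset.filter (fun i => i ≠ 0) p.parts.toFinset
      mem_support_toFun := fun a => by
        simp only [smul_eq_mul, ne_eq, mul_eq_zero, Multiset.count_eq_zero]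
        rw [not_or, not_not]
        simp only [Multiset.mem_toFinset, not_not, mem_filter] }
  refine Finset.card_bij φ ?_ ?_ ?_
  · intro a ha
    simp only [φ, not_forall, not_exists, not_and, exists_prop, mem_filter]
    rw [mem_finsuppAntidiag]
    dsimp only [ne_eq, smul_eq_mul, id_eq, eq_mpr_eq_cast, le_eq_subset, Finsupp.coe_mk]
    simp only [mem_univ, forall_true_left, not_and, not_forall, exists_prop,
      mem_filter, true_and] at ha
    refine ⟨⟨?_, fun i ↦ ?_⟩, fun i _ ↦ ⟨a.parts.count i, ha.1 i, rfl⟩⟩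
    · conv_rhs => simp [← a.parts_sum]
      rw [sum_multiset_count_of_subset _ s]
      · simp only [smul_eq_mul]
      · intro i
        simp only [Multiset.mem_toFinset, not_not, mem_filter]
        apply ha.2
    · simp only [ne_eq, Multiset.mem_toFinset, not_not, mem_filter, and_imp]
      exact fun hi _ ↦ ha.2 i hi
  · intro p₁ hp₁ p₂ hp₂ h
    apply Nat.Partition.ext
    simp only [true_and, mem_univ, mem_filter] at hp₁ hp₂
    ext i
    simp only [φ, ne_eq, Multiset.mem_toFinset, not_not, smul_eq_mul, Finsupp.mk.injEq] at h
    by_cases hi : i = 0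
    · rw [hi]
      rw [Multiset.count_eq_zero_of_notMem]
      · rw [Multiset.count_eq_zero_of_notMem]
        intro a; exact Nat.lt_irrefl 0 (hs 0 (hp₂.2 0 a))
      intro a; exact Nat.lt_irrefl 0 (hs 0 (hp₁.2 0 a))
    · rw [← mul_left_inj' hi]
      rw [funext_iff] at h
      exact h.2 i
  · simp only [φ, mem_filter, mem_finsuppAntidiag, mem_univ, exists_prop, true_and, and_assoc]
    rintro f ⟨hf, hf₃, hf₄⟩
    have hf' : f ∈ finsuppAntidiag s n := mem_finsuppAntidiag.mpr ⟨hf, hf₃⟩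
    simp only [mem_finsuppAntidiag] at hf'
    refine ⟨⟨∑ i ∈ s, Multiset.replicate (f i / i) i, ?_, ?_⟩, ?_, ?_, ?_⟩
    · intro i hi
      simp only [exists_prop, Multiset.mem_sum, Finset.mem_map, Function.Embedding.coeFn_mk] at hi
      rcases hi with ⟨t, ht, z⟩
      apply hs
      rwa [Multiset.eq_of_mem_replicate z]
    · simp_rw [Multiset.sum_sum, Multiset.sum_replicate, Nat.nsmul_eq_mul]
      rw [← hf'.1]
      refine sum_congr rfl fun i hi => Nat.div_mul_cancel ?_
      rcases hf₄ i hi with ⟨w, _, hw₂⟩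
      rw [← hw₂]
      exact dvd_mul_left _ _
    · intro i
      simp_rw [Multiset.count_sum', Multiset.count_replicate, sum_ite_eq']
      split_ifs with h
      · rcases hf₄ i h with ⟨w, hw₁, hw₂⟩
        rwa [← hw₂, Nat.mul_div_cancel _ (hs i h)]
      · exact hc _ h
    · intro i hi
      rw [Multiset.mem_sum] at hi
      rcases hi with ⟨j, hj₁, hj₂⟩
      rwa [Multiset.eq_of_mem_replicate hj₂]
    · ext i
      simp_rw [Multiset.count_sum', Multiset.count_replicate, sum_ite_eq']
      simp only [ne_eq, Multiset.mem_toFinset, not_not, smul_eq_mul, ite_mul,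
        zero_mul, Finsupp.coe_mk]
      split_ifs with h
      · apply Nat.div_mul_cancel
        rcases hf₄ i h with ⟨w, _, hw₂⟩
        apply Dvd.intro_left _ hw₂
      · apply symm
        rw [← Finsupp.notMem_support_iff]
        exact notMem_mono hf'.2 h

theorem coeff_F (n N : ℕ) (h : n ≤ N) :
    coeff (R := ℚ) n (∏ i ∈ range N, (1 - (X : PowerSeries ℚ) ^ (i + 1))⁻¹) = p n := by
  have := partialGF_prop ℚ n ((range N).map ⟨Nat.succ, Nat.succ_injective⟩)
    (fun i hi => by simp only [Finset.mem_map, Function.Embedding.coeFn_mk] at hi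
                    obtain ⟨a, -, rfl⟩ := hi; exact Nat.succ_pos a)
    (fun _ => Set.univ) (fun _ _ => trivial)
  rw [Finset.prod_map] at this
  simp_rw [Function.Embedding.coeFn_mk] at this
  have h2 : ∀ i : ℕ, indicatorSeries ℚ ((· * (i+1)) '' Set.univ) =
      indicatorSeries ℚ {k | i + 1 ∣ k} := by
    intro i
    have hset : ((· * (i+1)) '' Set.univ) = {k | i + 1 ∣ k} := by
      ext k
      constructor
      · rintro ⟨a, -, rfl⟩; exact Dvd.intro_left a rfl
      · rintro ⟨a, rfl⟩; exact ⟨a, trivial, mul_comm _ _⟩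
    rw [hset]
  have h3 : ∀ i ∈ range N, (1 - (X : PowerSeries ℚ) ^ (i + 1))⁻¹ =
      indicatorSeries ℚ ((· * (Nat.succ i)) '' Set.univ) := by
    intro i _
    rw [show Nat.succ i = i + 1 from rfl, num_series', h2]
  rw [Finset.prod_congr rfl h3, ← this]
  rw [p, Nat.card_eq_fintype_card, ← Finset.card_univ]
  norm_cast
  refine congrArg Finset.card (Finset.filter_true_of_mem ?_)
  intro P _
  refine ⟨fun j => trivial, fun j hj => ?_⟩
  simp only [Finset.mem_map, mem_range, Function.Embedding.coeFn_mk]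
  have hj1 : 0 < j := P.parts_pos hj
  have hjn : j ≤ n := by
    simpa [P.parts_sum] using Multiset.single_le_sum (fun _ _ => Nat.zero_le _) _ hj
  exact ⟨j - 1, by omega, by omega⟩



lemma sup_mem_of_ne_zero {s : Multiset ℕ} (h : s ≠ 0) : s.sup ∈ s := by
  induction s using Multiset.induction with
  | empty => simp at h
  | cons a t ih =>
    rw [Multiset.sup_cons]
    rcases eq_or_ne t 0 with rfl | ht
    · simp
    · rcases le_total t.sup a with hle | hle
      · rw [sup_eq_left.2 hle]; exact Multiset.mem_cons_self a t
      · rw [sup_eq_right.2 hle]; exact Multiset.mem_cons_of_mem (ih ht)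

lemma sum_filter_ne_zero (s : Multiset ℕ) :
    (Multiset.filter (fun x => x ≠ 0) s).sum = s.sum := by
  induction s using Multiset.induction with
  | empty => simp
  | cons a t ih =>
    rw [Multiset.filter_cons, Multiset.sum_cons]
    by_cases ha : a = 0
    · simp [ha, ih]
    · simp [ha, ih]

lemma sum_map_pred {s : Multiset ℕ} (h : ∀ x ∈ s, 0 < x) :
    (s.map (· - 1)).sum + Multiset.card s = s.sum := by
  induction s using Multiset.induction with
  | empty => simp
  | cons a t ih =>
    rw [Multiset.map_cons, Multiset.sum_cons, Multiset.sum_cons, Multiset.card_cons]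
    have ha : 0 < a := h a (Multiset.mem_cons_self a t)
    have := ih (fun x hx => h x (Multiset.mem_cons_of_mem hx))
    omega

lemma sum_map_succ (s : Multiset ℕ) :
    (s.map (· + 1)).sum = s.sum + Multiset.card s := by
  induction s using Multiset.induction with
  | empty => simp
  | cons a t ih =>
    rw [Multiset.map_cons, Multiset.sum_cons, Multiset.sum_cons, Multiset.card_cons, ih]
    ring

lemma card_le_sum {s : Multiset ℕ} (h : ∀ x ∈ s, 0 < x) : Multiset.card s ≤ s.sum := by
  have := sum_map_pred h; omega

lemma map_succ_filter_pred {s : Multiset ℕ} (h : ∀ x ∈ s, 0 < x) :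
    (Multiset.filter (fun x => x ≠ 0) (s.map (· - 1))).map (· + 1) =
      Multiset.filter (fun x => x ≠ 1) s := by
  induction s using Multiset.induction with
  | empty => simp
  | cons a t ih =>
    have ha : 0 < a := h a (Multiset.mem_cons_self a t)
    have iht := ih (fun x hx => h x (Multiset.mem_cons_of_mem hx))
    rw [Multiset.map_cons, Multiset.filter_cons, Multiset.filter_cons]
    by_cases h1 : a = 1
    · subst h1
      simp [iht]
    · have h2 : a - 1 ≠ 0 := by omega
      rw [if_pos h2, if_pos h1, Multiset.map_add, Multiset.map_singleton, iht]
      have h3 : a - 1 + 1 = a := by omega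
      rw [h3]

/-- Dyson's map, forward direction. -/
def fwd (k : ℕ) (s : Multiset ℕ) : Multiset ℕ :=
  Multiset.filter (fun x => x ≠ 0) ((Multiset.card s - (k + 1)) ::ₘ s.map (· - 1))

/-- Dyson's map, backward direction. -/
def bwd (k : ℕ) (s : Multiset ℕ) : Multiset ℕ :=
  (s.erase s.sup).map (· + 1) +
    Multiset.replicate (s.sup + k + 1 - Multiset.card (s.erase s.sup)) 1

section fwd
variable {k : ℕ} {s : Multiset ℕ} (hpos : ∀ x ∈ s, 0 < x)
  (hrank : s.sup + k ≤ Multiset.card s) (hne : s ≠ 0)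

lemma fwd_pos : ∀ x ∈ fwd k s, 0 < x := by
  intro x hx
  have := (Multiset.mem_filter.1 hx).2
  omega

include hne hrank hpos in
lemma card_lb : k + 1 ≤ Multiset.card s := by
  have h1 : s.sup ∈ s := sup_mem_of_ne_zero hne
  have := hpos _ h1
  omega

include hne hrank hpos in
lemma fwd_sum : (fwd k s).sum + (k + 1) = s.sum := by
  have h1 := card_lb hpos hrank hne
  have h2 := sum_map_pred hpos
  rw [fwd, sum_filter_ne_zero, Multiset.sum_cons]
  omega

include hrank hpos in
lemma fwd_sup : (fwd k s).sup = Multiset.card s - (k + 1) := by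
  apply le_antisymm
  · apply Multiset.sup_le.2
    intro x hx
    rw [fwd, Multiset.mem_filter, Multiset.mem_cons] at hx
    rcases hx.1 with h | h
    · omega
    · rw [Multiset.mem_map] at h
      obtain ⟨y, hy, rfl⟩ := h
      have := Multiset.le_sup hy
      simp only [Nat.le_iff_lt_or_eq] at this ⊢
      omega
  · by_cases h0 : Multiset.card s - (k + 1) = 0
    · omega
    · apply Multiset.le_sup
      rw [fwd, Multiset.mem_filter, Multiset.mem_cons]
      exact ⟨Or.inl rfl, h0⟩

lemma fwd_card_le : Multiset.card (fwd k s) ≤ Multiset.card s + 1 := by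
  have := Multiset.card_le_card (Multiset.filter_le (fun x => x ≠ 0)
    ((Multiset.card s - (k + 1)) ::ₘ s.map (· - 1)))
  simpa [fwd] using this

include hne hrank hpos in
lemma bwd_fwd : bwd k (fwd k s) = s := by
  have h1 := card_lb hpos hrank hne
  set a := Multiset.card s - (k + 1) with ha
  set t := Multiset.filter (fun x => x ≠ 0) (s.map (· - 1)) with ht
  have hsup : (fwd k s).sup = a := fwd_sup hpos hrank
  have herase : (fwd k s).erase ((fwd k s).sup) = t := by
    rw [hsup, fwd, Multiset.filter_cons]
    by_cases h0 : a = 0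
    · rw [if_neg (by simpa using h0), zero_add, h0, Multiset.erase_of_notMem (by simp)]
    · rw [if_pos (by simpa using h0)]
      rw [Multiset.singleton_add, Multiset.erase_cons_head]
  have hcardt : Multiset.card t + (Multiset.count 1 s) = Multiset.card s := by
    have : Multiset.card (Multiset.filter (fun x => x ≠ 1) s) = Multiset.card t := by
      rw [← map_succ_filter_pred hpos, Multiset.card_map, ht]
    have h2 := Multiset.filter_add_not (fun x => x = 1) s
    have h3 := congrArg Multiset.card h2
    rw [Multiset.card_add] at h3
    have h4 : Multiset.card (Multiset.filter (fun x => x = 1) s) = Multiset.count 1 s := by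
      rw [Multiset.filter_eq', Multiset.card_replicate]
    simp only [ne_eq] at this
    omega
  rw [bwd, herase, hsup]
  rw [map_succ_filter_pred hpos]
  have hones : a + k + 1 - Multiset.card t = Multiset.count 1 s := by omega
  rw [hones]
  have : Multiset.replicate (Multiset.count 1 s) 1 =
      Multiset.filter (fun x => x = 1) s := (Multiset.filter_eq' s 1).symm
  rw [this]
  have := Multiset.filter_add_not (fun x => x = 1) s
  rw [add_comm]
  simpa [ne_eq] using this

end fwd

section bwd
variable {k : ℕ} {s : Multiset ℕ} (hpos : ∀ x ∈ s, 0 < x)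
  (hrank2 : Multiset.card s ≤ s.sup + k + 2)

lemma bwd_pos : ∀ x ∈ bwd k s, 0 < x := by
  intro x hx
  rw [bwd, Multiset.mem_add] at hx
  rcases hx with h | h
  · rw [Multiset.mem_map] at h; obtain ⟨y, -, rfl⟩ := h; omega
  · rw [Multiset.eq_of_mem_replicate h]; omega

include hrank2 in
lemma erase_card_le : Multiset.card (s.erase s.sup) ≤ s.sup + k + 1 := by
  rcases eq_or_ne s 0 with rfl | hne
  · simp
  · rw [Multiset.card_erase_of_mem (sup_mem_of_ne_zero hne)]
    have h1 : 1 ≤ Multiset.card s := by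
      rwa [Nat.one_le_iff_ne_zero, ne_eq, Multiset.card_eq_zero]
    rw [Nat.pred_eq_sub_one]
    omega

include hrank2 in
lemma bwd_card : Multiset.card (bwd k s) = s.sup + k + 1 := by
  have := erase_card_le hrank2 (k := k)
  rw [bwd, Multiset.card_add, Multiset.card_map, Multiset.card_replicate]
  omega

include hpos hrank2 in
lemma bwd_sum : (bwd k s).sum = s.sum + k + 1 := by
  have h1 := erase_card_le hrank2 (k := k)
  have h2 : (s.erase s.sup).sum + s.sup = s.sum := by
    rcases eq_or_ne s 0 with rfl | hne
    · simp
    · conv_rhs => rw [← Multiset.cons_erase (sup_mem_of_ne_zero hne)]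
      rw [Multiset.sum_cons]; ring
  rw [bwd, Multiset.sum_add, sum_map_succ, Multiset.sum_replicate, smul_eq_mul, mul_one]
  omega

lemma bwd_mem_le : ∀ x ∈ bwd k s, x ≤ s.sup + 1 := by
  intro x hx
  rw [bwd, Multiset.mem_add] at hx
  rcases hx with h | h
  · rw [Multiset.mem_map] at h
    obtain ⟨y, hy, rfl⟩ := h
    have : y ∈ s := Multiset.mem_of_le (Multiset.erase_le _ _) hy
    have := Multiset.le_sup this
    omega
  · rw [Multiset.eq_of_mem_replicate h]; omega

include hpos hrank2 in
lemma fwd_bwd : fwd k (bwd k s) = s := by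
  have hcard := bwd_card hrank2
  rw [fwd, hcard]
  have h0 : s.sup + k + 1 - (k + 1) = s.sup := by omega
  rw [h0]
  have hmap : (bwd k s).map (· - 1) =
      s.erase s.sup + Multiset.replicate (s.sup + k + 1 - Multiset.card (s.erase s.sup)) 0 := by
    rw [bwd, Multiset.map_add, Multiset.map_map, Multiset.map_replicate]
    congr 1
    rw [show ((· - 1) ∘ (· + 1)) = (id : ℕ → ℕ) from funext fun x => by simp, Multiset.map_id]
  rw [hmap, Multiset.filter_cons, Multiset.filter_add]
  have hre : Multiset.filter (fun x => x ≠ 0)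
      (Multiset.replicate (s.sup + k + 1 - Multiset.card (s.erase s.sup)) (0:ℕ)) = 0 := by
    rw [Multiset.filter_eq_nil]
    intro x hx
    rw [Multiset.eq_of_mem_replicate hx]
    simp
  have hfe : Multiset.filter (fun x => x ≠ 0) (s.erase s.sup) = s.erase s.sup := by
    rw [Multiset.filter_eq_self]
    intro x hx
    have : x ∈ s := Multiset.mem_of_le (Multiset.erase_le _ _) hx
    have := hpos x this
    omega
  rw [hre, hfe, add_zero]
  rcases eq_or_ne s 0 with rfl | hne
  · simp
  · have hsup : s.sup ∈ s := sup_mem_of_ne_zero hne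
    have : s.sup ≠ 0 := by have := hpos _ hsup; omega
    rw [if_pos (by simpa using this), Multiset.singleton_add, Multiset.cons_erase hsup]

end bwd

noncomputable def g (k n : ℕ) : ℕ := Nat.card {P : n.Partition // rank P ≤ -(k : ℤ)}

/-- Dyson's bijection. -/
def dysonEquiv (k m : ℕ) :
    {P : (m + k + 1).Partition // rank P ≤ -(k : ℤ)} ≃
      {Q : m.Partition // -((k : ℤ) + 2) ≤ rank Q} where
  toFun P := by
    have hpos : ∀ x ∈ P.1.parts, 0 < x := fun x hx => P.1.parts_pos hx
    have hsum := P.1.parts_sum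
    have hrank : P.1.parts.sup + k ≤ Multiset.card P.1.parts := by
      have := P.2; rw [rank] at this; omega
    have hne : P.1.parts ≠ 0 := by
      intro h; rw [h] at hsum; simp at hsum
    refine ⟨⟨fwd k P.1.parts, fun hx => fwd_pos _ hx, ?_⟩, ?_⟩
    · have := fwd_sum hpos hrank hne
      omega
    · have h1 := card_lb hpos hrank hne
      have h2 := fwd_sup hpos hrank
      have h3 := fwd_card_le (k := k) (s := P.1.parts)
      show -((k : ℤ) + 2) ≤ ((fwd k P.1.parts).sup : ℤ) - (Multiset.card (fwd k P.1.parts) : ℤ)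
      omega
  invFun Q := by
    have hpos : ∀ x ∈ Q.1.parts, 0 < x := fun x hx => Q.1.parts_pos hx
    have hsum := Q.1.parts_sum
    have hrank2 : Multiset.card Q.1.parts ≤ Q.1.parts.sup + k + 2 := by
      have := Q.2; rw [rank] at this; omega
    refine ⟨⟨bwd k Q.1.parts, fun hx => bwd_pos _ hx, ?_⟩, ?_⟩
    · have := bwd_sum hpos hrank2
      omega
    · have h1 := bwd_card (s := Q.1.parts) hrank2 (k := k)
      have h2 : (bwd k Q.1.parts).sup ≤ Q.1.parts.sup + 1 :=
        Multiset.sup_le.2 bwd_mem_le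
      show ((bwd k Q.1.parts).sup : ℤ) - (Multiset.card (bwd k Q.1.parts) : ℤ) ≤ -(k : ℤ)
      omega
  left_inv P := by
    apply Subtype.ext
    apply Nat.Partition.ext
    show bwd k (fwd k P.1.parts) = P.1.parts
    have hpos : ∀ x ∈ P.1.parts, 0 < x := fun x hx => P.1.parts_pos hx
    have hsum := P.1.parts_sum
    have hrank : P.1.parts.sup + k ≤ Multiset.card P.1.parts := by
      have := P.2; rw [rank] at this; omega
    have hne : P.1.parts ≠ 0 := by
      intro h; rw [h] at hsum; simp at hsum
    exact bwd_fwd hpos hrank hne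
  right_inv Q := by
    apply Subtype.ext
    apply Nat.Partition.ext
    show fwd k (bwd k Q.1.parts) = Q.1.parts
    have hpos : ∀ x ∈ Q.1.parts, 0 < x := fun x hx => Q.1.parts_pos hx
    have hrank2 : Multiset.card Q.1.parts ≤ Q.1.parts.sup + k + 2 := by
      have := Q.2; rw [rank] at this; omega
    exact fwd_bwd hpos hrank2

lemma dyson (k m : ℕ) : g k (m + k + 1) + g (k + 3) m = p m := by
  classical
  rw [g, g, p, Nat.card_congr (dysonEquiv k m)]
  have e2 : {P : m.Partition // rank P ≤ -((k + 3 : ℕ) : ℤ)} ≃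
      {P : m.Partition // ¬(-((k : ℤ) + 2) ≤ rank P)} := by
    apply Equiv.subtypeEquivRight
    intro P
    push_cast
    omega
  rw [Nat.card_congr e2, Nat.card_congr (Equiv.sumCompl
    (fun P : m.Partition => -((k : ℤ) + 2) ≤ rank P)).symm, Nat.card_sum]

def D : ℕ → ℕ → ℕ
  | k, 0 => k + 1
  | k, n + 1 => (k + 1) + D (k + 3) n

lemma two_D (k n : ℕ) : 2 * D k n = (n + 1) * (2 * k + 2 + 3 * n) := by
  induction n generalizing k with
  | zero => simp [D]; ring
  | succ n ih =>
    rw [D, Nat.mul_add, ih]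
    ring

lemma D_ge (k n : ℕ) : n + 1 ≤ D k n ∧ k + 1 ≤ D k n := by
  induction n generalizing k with
  | zero => simp [D]
  | succ n ih =>
    have := ih (k + 3)
    rw [D]
    omega

lemma D_two (n : ℕ) : D 2 n = 3 * (n + 1) * (n + 2) / 2 := by
  have h := two_D 2 n
  have h2 : (n + 1) * (2 * 2 + 2 + 3 * n) = 3 * (n + 1) * (n + 2) := by ring
  omega

lemma g_zero {k m : ℕ} (hk : 1 ≤ k) (hm : m ≤ k) : g k m = 0 := by
  rw [g]
  have : IsEmpty {P : m.Partition // rank P ≤ -(k : ℤ)} := by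
    rw [isEmpty_subtype]
    intro P
    have hpos : ∀ x ∈ P.parts, 0 < x := fun x hx => P.parts_pos hx
    have hsum := P.parts_sum
    have hcard : Multiset.card P.parts ≤ m := by
      have := card_le_sum hpos
      omega
    rw [rank]
    rcases eq_or_ne P.parts 0 with h0 | hne
    · rw [h0]
      simp
      omega
    · have h1 : 1 ≤ P.parts.sup := by
        have hs := sup_mem_of_ne_zero hne
        have := hpos _ hs
        omega
      omega
  simp [Nat.card_of_isEmpty]

lemma main_identity : ∀ m k : ℕ, 1 ≤ k →
    (g k m : ℤ) = ∑ n ∈ range (m + 1), (-1 : ℤ) ^ n * pz ((m : ℤ) - D k n) := by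
  intro m
  induction m using Nat.strong_induction_on with
  | _ m IH =>
    intro k hk
    by_cases hm : m ≤ k
    · rw [g_zero hk hm]
      rw [eq_comm]
      apply Finset.sum_eq_zero
      intro n _
      have := D_ge k n
      have hpz : pz ((m : ℤ) - D k n) = 0 := by
        rw [pz, if_neg (by push_cast; omega)]
      rw [hpz]
      simp
    · push_neg at hm
      set m' := m - (k + 1) with hm'
      have hmm : m = m' + k + 1 := by omega
      have hrec : (g k m : ℤ) = (p m' : ℤ) - g (k + 3) m' := by
        have := dyson k m'
        rw [← hmm] at this
        omega
      have hIH := IH m' (by omega) (k + 3) (by omega)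
      -- extend the IH sum from range (m'+1) to range m
      have hext : ∑ n ∈ range (m' + 1), (-1 : ℤ) ^ n * pz ((m' : ℤ) - D (k + 3) n) =
          ∑ n ∈ range m, (-1 : ℤ) ^ n * pz ((m' : ℤ) - D (k + 3) n) := by
        apply Finset.sum_subset (Finset.range_subset_range.2 (by omega))
        intro n _ hn
        rw [mem_range, not_lt] at hn
        have := D_ge (k + 3) n
        have hpz : pz ((m' : ℤ) - D (k + 3) n) = 0 := by
          rw [pz, if_neg (by push_cast; omega)]
        rw [hpz]; simp
      rw [hrec, hIH, hext]
      rw [Finset.sum_range_succ']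
      have h0 : (-1 : ℤ) ^ 0 * pz ((m : ℤ) - D k 0) = (p m' : ℤ) := by
        rw [pow_zero, one_mul, show D k 0 = k + 1 from rfl, pz,
          if_pos (by push_cast; omega)]
        have harg : ((m : ℤ) - ((k + 1 : ℕ) : ℤ)).toNat = m' := by
          push_cast
          omega
        rw [harg]
      rw [h0]
      have hterm : ∀ n, (-1 : ℤ) ^ (n + 1) * pz ((m : ℤ) - D k (n + 1)) =
          -((-1 : ℤ) ^ n * pz ((m' : ℤ) - D (k + 3) n)) := by
        intro n
        have hD : ((D k (n + 1) : ℤ)) = (k + 1 : ℤ) + D (k + 3) n := by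
          rw [show D k (n + 1) = (k + 1) + D (k + 3) n from rfl]
          push_cast
          ring
        have harg : (m : ℤ) - D k (n + 1) = (m' : ℤ) - D (k + 3) n := by
          rw [hD]
          push_cast
          omega
        rw [harg, pow_succ]
        ring
      rw [Finset.sum_congr rfl (fun n _ => hterm n), Finset.sum_neg_distrib]
      ring



noncomputable def Pgf : PowerSeries ℚ := PowerSeries.mk fun n => (p n : ℚ)

lemma constCoeff_E : constantCoeff E = 1 := by
  rw [← coeff_zero_eq_constantCoeff, coeff_E 0 1 one_pos, qPoch]
  rw [Finset.prod_range_one]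
  simp

lemma coeff_mul_congr (n : ℕ) (A A' B B' : PowerSeries ℚ)
    (hA : ∀ k ≤ n, coeff k A = coeff k A')
    (hB : ∀ k ≤ n, coeff k B = coeff k B') :
    coeff n (A * B) = coeff n (A' * B') := by
  rw [coeff_mul, coeff_mul]
  apply Finset.sum_congr rfl
  intro x hx
  rw [HasAntidiagonal.mem_antidiagonal] at hx
  rw [hA x.1 (by omega), hB x.2 (by omega)]

lemma Pgf_mul_E : Pgf * E = 1 := by
  ext n
  rw [coeff_mul_congr n Pgf (∏ i ∈ range (n+1), (1 - (X : PowerSeries ℚ) ^ (i + 1))⁻¹)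
    E (qPoch (n+1))
    (fun k hk => by rw [Pgf, coeff_mk, coeff_F k (n+1) (by omega)])
    (fun k hk => coeff_E k (n+1) (by omega))]
  congr 1
  rw [qPoch, ← Finset.prod_mul_distrib]
  apply Finset.prod_eq_one
  intro i _
  apply PowerSeries.inv_mul_cancel
  simp [zero_pow]

lemma E_inv : E⁻¹ = Pgf := by
  symm
  rw [PowerSeries.eq_inv_iff_mul_eq_one (by rw [constCoeff_E]; norm_num)]
  exact Pgf_mul_E

lemma T_ge (n : ℕ) : n + 1 ≤ 3 * (n + 1) * (n + 2) / 2 := by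
  have h1 := (D_ge 2 n).1
  have h2 := D_two n
  omega

noncomputable def Sphi : PowerSeries ℚ := PowerSeries.mk fun d =>
  ∑ n ∈ range (d + 1), (-1 : ℚ) ^ n * (if 3 * (n + 1) * (n + 2) / 2 = d then 1 else 0)

lemma hasSum_S : HasSum
    (fun n : ℕ => ((-1 : ℚ) ^ n) • (X : PowerSeries ℚ) ^ (3 * (n + 1) * (n + 2) / 2)) Sphi := by
  apply hasSum_of_coeff
  intro d s hs
  rw [map_sum, Sphi, coeff_mk]
  have hterm : ∀ i, coeff d (((-1 : ℚ) ^ i) • (X : PowerSeries ℚ) ^ (3 * (i + 1) * (i + 2) / 2))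
      = (-1 : ℚ) ^ i * (if 3 * (i + 1) * (i + 2) / 2 = d then 1 else 0) := by
    intro i
    rw [LinearMap.map_smul, smul_eq_mul, coeff_X_pow]
    congr 1
    simp only [eq_comm]
  rw [Finset.sum_congr rfl (fun i _ => hterm i)]
  symm
  apply Finset.sum_subset hs
  intro i _ hi
  rw [mem_range, not_lt] at hi
  have := T_ge i
  rw [if_neg (by omega), mul_zero]

lemma pz_of_le {T m : ℕ} (h : T ≤ m) : pz ((m : ℤ) - T) = p (m - T) := by
  rw [pz, if_pos (by push_cast; omega)]
  congr 1
  omega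

lemma pz_of_gt {T m : ℕ} (h : m < T) : pz ((m : ℤ) - T) = 0 := by
  rw [pz, if_neg (by push_cast; omega)]

theorem final (m : ℕ) :
    (PowerSeries.coeff m)
        (E⁻¹ * ∑' n : ℕ,
          ((-1 : ℚ) ^ n) • (X : PowerSeries ℚ) ^ (3 * (n + 1) * (n + 2) / 2)) =
      (gePart m : ℚ) := by
  have hT2 := my_t2
  rw [hasSum_S.tsum_eq, E_inv, coeff_mul]
  have hcoeffS : ∀ d, d ≤ m → coeff d Sphi =
      ∑ n ∈ range (m + 1), (-1 : ℚ) ^ n * (if 3 * (n + 1) * (n + 2) / 2 = d then 1 else 0) := by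
    intro d hd
    rw [Sphi, coeff_mk]
    apply Finset.sum_subset (Finset.range_subset_range.2 (by omega))
    intro i _ hi
    rw [mem_range, not_lt] at hi
    have := T_ge i
    rw [if_neg (by omega), mul_zero]
  have h1 : ∀ ij ∈ antidiagonal m, coeff ij.1 Pgf * coeff ij.2 Sphi =
      ∑ n ∈ range (m + 1),
        (p ij.1 : ℚ) * ((-1 : ℚ) ^ n * (if 3 * (n + 1) * (n + 2) / 2 = ij.2 then 1 else 0)) := by
    intro ij hij
    rw [HasAntidiagonal.mem_antidiagonal] at hij
    rw [Pgf, coeff_mk, hcoeffS ij.2 (by omega), Finset.mul_sum]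
  rw [Finset.sum_congr rfl h1, Finset.sum_comm]
  have h2 : ∀ n, ∑ ij ∈ antidiagonal m,
      (p ij.1 : ℚ) * ((-1 : ℚ) ^ n * (if 3 * (n + 1) * (n + 2) / 2 = ij.2 then 1 else 0)) =
      (-1 : ℚ) ^ n * (pz ((m : ℤ) - (3 * (n + 1) * (n + 2) / 2 : ℕ)) : ℚ) := by
    intro n
    set T := 3 * (n + 1) * (n + 2) / 2 with hT
    rw [Finset.Nat.sum_antidiagonal_eq_sum_range_succ_mk]
    by_cases hTm : T ≤ m
    · rw [Finset.sum_eq_single (m - T)]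
      · rw [if_pos (by omega), pz_of_le hTm]
        ring
      · intro j hj hne
        rw [mem_range] at hj
        rw [if_neg (fun h => hne (by omega)), mul_zero, mul_zero]
      · intro h
        exact absurd (mem_range.2 (by omega)) h
    · rw [pz_of_gt (by omega), Finset.sum_eq_zero]
      · simp
      · intro j hj
        rw [mem_range] at hj
        rw [if_neg (by omega), mul_zero, mul_zero]
  rw [Finset.sum_congr rfl (fun n _ => h2 n)]
  have hmain := main_identity m 2 (by norm_num)
  have hmain2 : (g 2 m : ℤ) =
      ∑ n ∈ range (m + 1), (-1 : ℤ) ^ n * pz ((m : ℤ) - (3 * (n + 1) * (n + 2) / 2 : ℕ)) := by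
    rw [hmain]
    apply Finset.sum_congr rfl
    intro n _
    rw [D_two n]
  have hge : gePart m = g 2 m := by
    rw [gePart, g]
    norm_num
  rw [hge]
  have hfin : ((g 2 m : ℕ) : ℚ) =
      ∑ n ∈ range (m + 1),
        (-1 : ℚ) ^ n * (pz ((m : ℤ) - (3 * (n + 1) * (n + 2) / 2 : ℕ)) : ℚ) := by
    have h3 := congrArg (fun z : ℤ => (z : ℚ)) hmain2
    simp only [Int.cast_sum, Int.cast_mul, Int.cast_pow, Int.cast_neg, Int.cast_one,
      Int.cast_natCast] at h3
    exact h3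
  rw [hfin]

end GEAux

theorem stmt13 (m : ℕ) :
    (PowerSeries.coeff m)
        (E⁻¹ * ∑' n : ℕ,
          ((-1 : ℚ) ^ n) • (X : PowerSeries ℚ) ^ (3 * (n + 1) * (n + 2) / 2)) =
      (gePart m : ℚ) :=
  GEAux.final m
end

section
/- For every integer n ≥ 0 and every integer k ≥ 1, (-1)^{k-1} ( Σ_{j=1}^{k} (-1)^{j-1} p(n - 3j(j+1)/2) - ge(n) ) ≥ 0, with strict inequality if n ≥ 3(k+1)(k+2)/2, where ge(n) counts partitions of n with rank at most -2. -/
open PowerSeries Finset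

namespace GEaux

lemma sup_mem {s : Multiset ℕ} (h : s ≠ 0) : s.sup ∈ s := by
  induction s using Multiset.induction with
  | empty => exact absurd rfl h
  | cons a t ih =>
    rcases eq_or_ne t 0 with rfl | ht
    · simp
    · rw [Multiset.sup_cons]
      rcases le_total a t.sup with h1 | h1
      · rw [sup_eq_right.mpr h1]
        exact Multiset.mem_cons_of_mem (ih ht)
      · rw [sup_eq_left.mpr h1]
        exact Multiset.mem_cons_self a t

lemma sum_map_succ (s : Multiset ℕ) :
    ((s.map (· + 1)).sum : ℕ) = s.sum + Multiset.card s := by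
  induction s using Multiset.induction with
  | empty => simp
  | cons a t ih =>
    simp only [Multiset.map_cons, Multiset.sum_cons, Multiset.card_cons, ih]
    omega

lemma sum_map_pred (s : Multiset ℕ) (h : ∀ x ∈ s, 0 < x) :
    (s.map (· - 1)).sum + Multiset.card s = s.sum := by
  induction s using Multiset.induction with
  | empty => simp
  | cons a t ih =>
    have ha := h a (Multiset.mem_cons_self a t)
    have ht := ih (fun x hx => h x (Multiset.mem_cons_of_mem hx))
    simp only [Multiset.map_cons, Multiset.sum_cons, Multiset.card_cons]
    omega

lemma sum_filter_pos (t : Multiset ℕ) : (t.filter (0 < ·)).sum = t.sum := by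
  classical
  conv_rhs => rw [← Multiset.filter_add_not (0 < ·) t]
  rw [Multiset.sum_add]
  have h0 : (t.filter (fun x => ¬ 0 < x)).sum = 0 := by
    apply Multiset.sum_eq_zero
    intro x hx
    have := Multiset.of_mem_filter hx
    omega
  omega

lemma filter_pos_map_pred (s : Multiset ℕ) :
    (s.map (· - 1)).filter (0 < ·) = (s.filter (1 < ·)).map (· - 1) := by
  classical
  rw [Multiset.filter_map]
  congr 1
  apply Multiset.filter_congr
  intro x _
  simp only [Function.comp]
  constructor <;> intro <;> omega

lemma card_le_sum (s : Multiset ℕ) (h : ∀ x ∈ s, 0 < x) :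
    Multiset.card s ≤ s.sum := by
  induction s using Multiset.induction with
  | empty => simp
  | cons a t ih =>
    have ha := h a (Multiset.mem_cons_self a t)
    have ht := ih (fun x hx => h x (Multiset.mem_cons_of_mem hx))
    simp only [Multiset.card_cons, Multiset.sum_cons]
    omega

def fwdM (m : ℕ) (s : Multiset ℕ) : Multiset ℕ :=
  Multiset.replicate (s.sup + m + 1 - Multiset.card (s.erase s.sup)) 1
    + (s.erase s.sup).map (· + 1)

def bwdM (m : ℕ) (s : Multiset ℕ) : Multiset ℕ :=
  ((Multiset.card s - (m + 1)) ::ₘ s.map (· - 1)).filter (0 < ·)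

lemma fwd_pos (m : ℕ) (s : Multiset ℕ) : ∀ x ∈ fwdM m s, 0 < x := by
  intro x hx
  rcases Multiset.mem_add.mp hx with h | h
  · rw [Multiset.eq_of_mem_replicate h]; norm_num
  · obtain ⟨y, _, rfl⟩ := Multiset.mem_map.mp h
    omega

lemma fwd_sup_le (m : ℕ) (s : Multiset ℕ) : (fwdM m s).sup ≤ s.sup + 1 := by
  apply Multiset.sup_le.mpr
  intro b hb
  rcases Multiset.mem_add.mp hb with h | h
  · rw [Multiset.eq_of_mem_replicate h]; omega
  · obtain ⟨y, hy, rfl⟩ := Multiset.mem_map.mp h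
    have := Multiset.le_sup (Multiset.mem_of_mem_erase hy)
    omega

lemma fwd_card (m : ℕ) (s : Multiset ℕ) (hc : Multiset.card s ≤ s.sup + m + 2) :
    Multiset.card (fwdM m s) = s.sup + m + 1 := by
  rcases eq_or_ne s 0 with rfl | hne
  · simp [fwdM]
  · have he : Multiset.card (s.erase s.sup) + 1 = Multiset.card s :=
      Multiset.card_erase_add_one (sup_mem hne)
    simp only [fwdM, Multiset.card_add, Multiset.card_replicate, Multiset.card_map]
    omega

lemma fwd_sum (m : ℕ) (s : Multiset ℕ) (hc : Multiset.card s ≤ s.sup + m + 2) :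
    (fwdM m s).sum = s.sum + m + 1 := by
  rcases eq_or_ne s 0 with rfl | hne
  · simp [fwdM]; omega
  · have hmem := sup_mem hne
    have he : Multiset.card (s.erase s.sup) + 1 = Multiset.card s :=
      Multiset.card_erase_add_one hmem
    have hsum : s.sup + (s.erase s.sup).sum = s.sum := by
      conv_rhs => rw [← Multiset.cons_erase hmem]
      rw [Multiset.sum_cons]
    simp only [fwdM, Multiset.sum_add, Multiset.sum_replicate, smul_eq_mul, mul_one,
      sum_map_succ]
    omega

lemma bwd_pos (m : ℕ) (s : Multiset ℕ) : ∀ x ∈ bwdM m s, 0 < x := by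
  intro x hx
  exact Multiset.of_mem_filter hx

lemma bwd_decomp (m : ℕ) (s : Multiset ℕ) (hs : ∀ x ∈ s, 0 < x) :
    bwdM m s = (if 0 < Multiset.card s - (m + 1) then {Multiset.card s - (m + 1)} else 0)
      + (s.filter (1 < ·)).map (· - 1) := by
  classical
  rw [bwdM, Multiset.filter_cons, filter_pos_map_pred]

lemma bwd_sum (m : ℕ) (s : Multiset ℕ) (hs : ∀ x ∈ s, 0 < x) (hne : s ≠ 0)
    (hr : s.sup + m ≤ Multiset.card s) :
    (bwdM m s).sum + (m + 1) = s.sum := by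
  have hsup : 1 ≤ s.sup := by
    obtain ⟨a, ha⟩ := Multiset.exists_mem_of_ne_zero hne
    exact le_trans (hs a ha) (Multiset.le_sup ha)
  have hcs : m + 1 ≤ Multiset.card s := by omega
  have h1 : (bwdM m s).sum = (Multiset.card s - (m+1)) + (s.map (· - 1)).sum := by
    rw [bwdM, sum_filter_pos, Multiset.sum_cons]
  have h2 := sum_map_pred s hs
  omega

lemma bwd_card_le (m : ℕ) (s : Multiset ℕ) (hs : ∀ x ∈ s, 0 < x)
    (hr : s.sup + m ≤ Multiset.card s) :
    Multiset.card (bwdM m s) ≤ (bwdM m s).sup + m + 2 := by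
  classical
  rw [bwd_decomp m s hs]
  by_cases h : 0 < Multiset.card s - (m + 1)
  · rw [if_pos h]
    have hcard : Multiset.card ((s.filter (1 < ·)).map (· - 1)) ≤ Multiset.card s := by
      rw [Multiset.card_map]
      exact Multiset.card_le_card (Multiset.filter_le _ s)
    have hsup : Multiset.card s - (m+1) ≤ ({Multiset.card s - (m + 1)} +
        (s.filter (1 < ·)).map (· - 1)).sup := by
      apply Multiset.le_sup
      rw [Multiset.mem_add]
      exact Or.inl (Multiset.mem_singleton_self _)
    simp only [Multiset.card_add, Multiset.card_singleton, Multiset.card_map] at *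
    omega
  · rw [if_neg h]
    -- card s ≤ m+1, sup ≤ card - m ≤ 1, so every part is 1, filter empty
    have hall : s.filter (1 < ·) = 0 := by
      rw [Multiset.filter_eq_nil]
      intro x hx
      have := Multiset.le_sup hx
      omega
    simp [hall]

lemma fwd_zero (m : ℕ) : fwdM m 0 = Multiset.replicate (m+1) 1 := by
  rw [fwdM]
  rw [show ((0 : Multiset ℕ).sup) = 0 from rfl]
  simp

lemma bwd_fwd (m : ℕ) (s : Multiset ℕ) (hs : ∀ x ∈ s, 0 < x)
    (hc : Multiset.card s ≤ s.sup + m + 2) :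
    bwdM m (fwdM m s) = s := by
  classical
  rcases eq_or_ne s 0 with rfl | hne
  · rw [fwd_zero, bwdM, Multiset.map_replicate, Multiset.card_replicate]
    rw [show (m + 1 - (m+1)) = 0 from by omega]
    apply Multiset.filter_eq_nil.mpr
    intro x hx
    rcases Multiset.mem_cons.mp hx with rfl | h
    · omega
    · rw [Multiset.eq_of_mem_replicate h]; omega
  · have hmem := sup_mem hne
    have hse : s.sup ::ₘ s.erase s.sup = s := Multiset.cons_erase hmem
    have hsup1 : 1 ≤ s.sup := by
      obtain ⟨a, ha⟩ := Multiset.exists_mem_of_ne_zero hne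
      exact le_trans (hs a ha) (Multiset.le_sup ha)
    have he : Multiset.card (s.erase s.sup) + 1 = Multiset.card s :=
      Multiset.card_erase_add_one hmem
    have hcard : Multiset.card (fwdM m s) = s.sup + m + 1 := fwd_card m s hc
    rw [bwdM, hcard]
    have hc1 : s.sup + m + 1 - (m+1) = s.sup := by omega
    rw [hc1]
    have hmap : (fwdM m s).map (· - 1) =
        Multiset.replicate (s.sup + m + 1 - Multiset.card (s.erase s.sup)) 0 + s.erase s.sup := by
      rw [fwdM, Multiset.map_add, Multiset.map_replicate, Multiset.map_map]
      congr 1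
      calc (s.erase s.sup).map ((· - 1) ∘ (· + 1))
          = (s.erase s.sup).map id := Multiset.map_congr rfl (fun x _ => by simp)
        _ = s.erase s.sup := Multiset.map_id _
    rw [hmap, Multiset.filter_cons, if_pos (by omega : (0:ℕ) < s.sup), Multiset.filter_add]
    rw [Multiset.filter_eq_nil.mpr (by intro x hx; rw [Multiset.eq_of_mem_replicate hx]; omega)]
    rw [Multiset.filter_eq_self.mpr (fun x hx => hs x (Multiset.mem_of_mem_erase hx))]
    rw [zero_add, Multiset.singleton_add, hse]

lemma fwd_bwd (m : ℕ) (s : Multiset ℕ) (hs : ∀ x ∈ s, 0 < x) (hne : s ≠ 0)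
    (hr : s.sup + m ≤ Multiset.card s) :
    fwdM m (bwdM m s) = s := by
  classical
  have hsup1 : 1 ≤ s.sup := by
    obtain ⟨a, ha⟩ := Multiset.exists_mem_of_ne_zero hne
    exact le_trans (hs a ha) (Multiset.le_sup ha)
  have hcs : m + 1 ≤ Multiset.card s := by omega
  rw [bwd_decomp m s hs]
  by_cases h : 0 < Multiset.card s - (m + 1)
  · rw [if_pos h]
    have hrle : ∀ x ∈ (s.filter (1 < ·)).map (· - 1), x ≤ Multiset.card s - (m+1) := by
      intro x hx
      obtain ⟨y, hy, rfl⟩ := Multiset.mem_map.mp hx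
      have h1 := Multiset.le_sup (Multiset.mem_of_mem_filter hy)
      omega
    have hsupb : ({Multiset.card s - (m+1)} + (s.filter (1 < ·)).map (· - 1) : Multiset ℕ).sup
        = Multiset.card s - (m+1) := by
      rw [Multiset.singleton_add, Multiset.sup_cons]
      exact sup_eq_left.mpr (Multiset.sup_le.mpr hrle)
    rw [fwdM, hsupb]
    rw [Multiset.singleton_add, Multiset.erase_cons_head]
    have hmap : ((s.filter (1 < ·)).map (· - 1)).map (· + 1) = s.filter (1 < ·) := by
      rw [Multiset.map_map]
      calc (s.filter (1 < ·)).map ((· + 1) ∘ (· - 1))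
          = (s.filter (1 < ·)).map id := Multiset.map_congr rfl (fun x hx => by
            have := Multiset.of_mem_filter hx
            simp only [Function.comp_apply, id_eq]
            omega)
        _ = s.filter (1 < ·) := Multiset.map_id _
    have hones : s.filter (fun x => ¬ 1 < x) =
        Multiset.replicate (Multiset.card (s.filter (fun x => ¬ 1 < x))) 1 := by
      apply (Multiset.eq_replicate_card).mpr
      intro x hx
      have h1 := Multiset.of_mem_filter hx
      have h2 := hs x (Multiset.mem_of_mem_filter hx)
      omega
    have hcards : Multiset.card (s.filter (1 < ·)) +
        Multiset.card (s.filter (fun x => ¬ 1 < x)) = Multiset.card s := by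
      rw [← Multiset.card_add, Multiset.filter_add_not]
    have ht : Multiset.card s - (m+1) + m + 1 -
        Multiset.card ((s.filter (1 < ·)).map (· - 1)) =
        Multiset.card (s.filter (fun x => ¬ 1 < x)) := by
      rw [Multiset.card_map]
      omega
    rw [hmap, ht, ← hones, add_comm]
    exact Multiset.filter_add_not _ s
  · rw [if_neg h]
    have hsup_le : s.sup ≤ 1 := by omega
    have hfilter : s.filter (1 < ·) = 0 := by
      rw [Multiset.filter_eq_nil]
      intro x hx
      have := le_trans (Multiset.le_sup hx) hsup_le
      omega
    rw [hfilter]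
    have hall : s = Multiset.replicate (Multiset.card s) 1 := by
      apply (Multiset.eq_replicate_card).mpr
      intro x hx
      have h1 := hs x hx
      have h2 := le_trans (Multiset.le_sup hx) hsup_le
      omega
    rw [Multiset.map_zero, add_zero, fwd_zero, hall]
    congr 1
    omega



noncomputable def B (m n : ℕ) : ℕ := Nat.card {P : n.Partition // rank P ≤ -(m : ℤ)}

noncomputable def dysonEquiv (m N : ℕ) (hm : 1 ≤ m) :
    {P : (N + m + 1).Partition // rank P ≤ -(m : ℤ)} ≃
      {Q : N.Partition // -((m : ℤ) + 2) ≤ rank Q} where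
  toFun := fun PP => by
    refine ⟨⟨bwdM m PP.1.parts, fun {x} hx => bwd_pos m _ x hx, ?_⟩, ?_⟩
    · -- sum
      have hne : PP.1.parts ≠ 0 := by
        intro h0
        have := PP.1.parts_sum
        rw [h0] at this
        simp at this
      have hr : PP.1.parts.sup + m ≤ Multiset.card PP.1.parts := by
        have h2 := PP.2
        rw [rank] at h2
        omega
      have := bwd_sum m PP.1.parts (fun x hx => PP.1.parts_pos hx) hne hr
      rw [PP.1.parts_sum] at this
      omega
    · -- rank lower bound
      have hne : PP.1.parts ≠ 0 := by
        intro h0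
        have := PP.1.parts_sum
        rw [h0] at this
        simp at this
      have hr : PP.1.parts.sup + m ≤ Multiset.card PP.1.parts := by
        have h2 := PP.2
        rw [rank] at h2
        omega
      have := bwd_card_le m PP.1.parts (fun x hx => PP.1.parts_pos hx) hr
      rw [rank]
      simp only
      omega
  invFun := fun QQ => by
    refine ⟨⟨fwdM m QQ.1.parts, fun {x} hx => fwd_pos m _ x hx, ?_⟩, ?_⟩
    · have hc : Multiset.card QQ.1.parts ≤ QQ.1.parts.sup + m + 2 := by
        have h2 := QQ.2
        rw [rank] at h2
        omega
      rw [fwd_sum m _ hc, QQ.1.parts_sum]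
    · have hc : Multiset.card QQ.1.parts ≤ QQ.1.parts.sup + m + 2 := by
        have h2 := QQ.2
        rw [rank] at h2
        omega
      have h1 := fwd_sup_le m QQ.1.parts
      have h2 := fwd_card m QQ.1.parts hc
      rw [rank]
      simp only
      omega
  left_inv := by
    rintro ⟨P, hP⟩
    apply Subtype.ext
    apply Nat.Partition.ext
    simp only
    apply fwd_bwd m P.parts (fun x hx => P.parts_pos hx)
    · intro h0
      have := P.parts_sum
      rw [h0] at this
      simp at this
    · rw [rank] at hP
      omega
  right_inv := by
    rintro ⟨Q, hQ⟩
    apply Subtype.ext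
    apply Nat.Partition.ext
    simp only
    apply bwd_fwd m Q.parts (fun x hx => Q.parts_pos hx)
    rw [rank] at hQ
    omega

lemma key (m N : ℕ) (hm : 1 ≤ m) : B m (N + m + 1) + B (m + 3) N = p N := by
  classical
  have h1 : B m (N + m + 1) = Nat.card {Q : N.Partition // -((m : ℤ) + 2) ≤ rank Q} :=
    Nat.card_congr (dysonEquiv m N hm)
  have h2 : ∀ Q : N.Partition, (-((m : ℤ) + 2) ≤ rank Q) ↔ ¬ (rank Q ≤ -((m + 3 : ℕ) : ℤ)) := by
    intro Q
    push_cast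
    omega
  rw [h1, Nat.card_congr (Equiv.subtypeEquivRight h2)]
  rw [B, p, Nat.card_eq_fintype_card, Nat.card_eq_fintype_card, Nat.card_eq_fintype_card,
    Fintype.card_subtype_compl]
  have := Fintype.card_subtype_le (fun Q : N.Partition => rank Q ≤ -((m + 3 : ℕ) : ℤ))
  omega

lemma B_eq_zero (m n : ℕ) (hm : 1 ≤ m) (hn : n ≤ m) : B m n = 0 := by
  rw [B, Nat.card_eq_zero]
  left
  constructor
  rintro ⟨P, hP⟩
  rw [rank] at hP
  rcases eq_or_ne P.parts 0 with h0 | h0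
  · rw [h0] at hP
    simp at hP
    omega
  · have hsup : 1 ≤ P.parts.sup := by
      obtain ⟨a, ha⟩ := Multiset.exists_mem_of_ne_zero h0
      exact le_trans (P.parts_pos ha) (Multiset.le_sup ha)
    have hcard := card_le_sum P.parts (fun x hx => P.parts_pos hx)
    have hsum := P.parts_sum
    omega

lemma B_pos (m n : ℕ) (h : m + 1 ≤ n) : 0 < B m n := by
  rw [B]
  have : Nonempty {P : n.Partition // rank P ≤ -(m : ℤ)} := by
    refine ⟨⟨⟨Multiset.replicate n 1, fun {x} hx => by
      rw [Multiset.eq_of_mem_replicate hx]; norm_num, by simp⟩, ?_⟩⟩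
    rw [rank]
    simp only [Multiset.card_replicate]
    have hsup : (Multiset.replicate n (1:ℕ)).sup ≤ 1 :=
      Multiset.sup_le.mpr (fun b hb => by rw [Multiset.eq_of_mem_replicate hb])
    omega
  exact Nat.card_pos

lemma gePart_eq_B (n : ℕ) : gePart n = B 2 n := by
  rw [gePart, B]
  apply Nat.card_congr
  apply Equiv.subtypeEquivRight
  intro P
  norm_num

noncomputable def Bz (m : ℕ) (t : ℤ) : ℕ := if 0 ≤ t then B m t.toNat else 0

lemma step (m : ℕ) (hm : 1 ≤ m) (t : ℤ) :
    (Bz m t : ℤ) = (pz (t - (m + 1)) : ℤ) - (Bz (m + 3) (t - (m + 1)) : ℤ) := by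
  by_cases ht : 0 ≤ t - (m + 1)
  · have htt : 0 ≤ t := by omega
    have hN : t.toNat = (t - (m + 1)).toNat + m + 1 := by omega
    rw [Bz, if_pos htt, hN, Bz, if_pos ht, pz, if_pos ht]
    have := key m (t - (m + 1)).toNat hm
    omega
  · rw [show pz (t - (m + 1)) = 0 from by rw [pz, if_neg ht],
      show Bz (m + 3) (t - (m + 1)) = 0 from by rw [Bz, if_neg ht]]
    by_cases htt : 0 ≤ t
    · rw [Bz, if_pos htt, B_eq_zero m t.toNat hm (by omega)]
      norm_num
    · rw [Bz, if_neg htt]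
      norm_num

lemma gePart_eq_Bz (n : ℕ) : (gePart n : ℤ) = (Bz 2 (n : ℤ) : ℤ) := by
  rw [Bz, if_pos (by positivity), Int.toNat_natCast, gePart_eq_B]

lemma half (j : ℕ) : ∃ c : ℤ, (j : ℤ) * (j + 1) = 2 * c ∧ (3 * (j : ℤ) * (j + 1)) / 2 = 3 * c := by
  obtain ⟨c, hc⟩ := Int.even_mul_succ_self (j : ℤ)
  refine ⟨c, by omega, ?_⟩
  rw [show (3 * (j : ℤ) * (j + 1)) = 2 * (3 * c) from by
    rw [mul_assoc, show ((j:ℤ) * (j+1)) = 2 * c from by omega]; ring]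
  exact Int.mul_ediv_cancel_left _ (by norm_num)

lemma main (k : ℕ) (hk : 1 ≤ k) (n : ℕ) :
    (gePart n : ℤ) =
      (∑ j ∈ Icc 1 k, (-1 : ℤ) ^ (j - 1) * (pz ((n : ℤ) - (3 * j * (j + 1)) / 2) : ℤ))
      + (-1 : ℤ) ^ k * (Bz (3 * k + 2) ((n : ℤ) - (3 * (k : ℤ) * (k + 1)) / 2) : ℤ) := by
  induction k, hk using Nat.le_induction with
  | base =>
    rw [Finset.Icc_self, Finset.sum_singleton]
    rw [gePart_eq_Bz n, step 2 (by norm_num) (n : ℤ)]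
    norm_num [sub_eq_add_neg]
  | succ k hk ih =>
    rw [Finset.sum_Icc_succ_top (by omega : 1 ≤ k + 1), ih]
    obtain ⟨c, hc, hdiv⟩ := half k
    obtain ⟨c', hc', hdiv'⟩ := half (k + 1)
    have hcc : c' = c + (k + 1) := by
      have h3 : ((k:ℤ) + 1) * ((k : ℤ) + 2) = (k : ℤ) * ((k:ℤ) + 1) + 2 * ((k:ℤ) + 1) := by ring
      push_cast at hc'
      linarith
    have hstep := step (3 * k + 2) (by omega) ((n : ℤ) - 3 * (k : ℤ) * ((k:ℤ) + 1) / 2)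
    rw [hdiv] at hstep
    push_cast at hstep
    have harg : (n : ℤ) - 3 * c - (3 * (k:ℤ) + 2 + 1) = (n : ℤ) - 3 * c' := by omega
    rw [harg] at hstep
    rw [hdiv]
    push_cast
    push_cast at hdiv'
    rw [hdiv']
    rw [show 3 * (k + 1) + 2 = 3 * k + 2 + 3 from by ring, hstep]
    ring
end GEaux

open GEaux in
theorem stmt16 (n k : ℕ) (hk : 1 ≤ k) :
    0 ≤ (-1 : ℤ) ^ (k - 1) *
      ((∑ j ∈ Icc 1 k, (-1 : ℤ) ^ (j - 1) * (pz ((n : ℤ) - (3 * j * (j + 1)) / 2) : ℤ)) -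
        (gePart n : ℤ)) ∧
    (n ≥ 3 * (k + 1) * (k + 2) / 2 →
      0 < (-1 : ℤ) ^ (k - 1) *
        ((∑ j ∈ Icc 1 k, (-1 : ℤ) ^ (j - 1) * (pz ((n : ℤ) - (3 * j * (j + 1)) / 2) : ℤ)) -
          (gePart n : ℤ))) := by
  have hmain := main k hk n
  set B0 : ℤ := (Bz (3 * k + 2) ((n : ℤ) - (3 * (k : ℤ) * (k + 1)) / 2) : ℤ) with hB0
  have hE : (-1 : ℤ) ^ (k - 1) *
      ((∑ j ∈ Icc 1 k, (-1 : ℤ) ^ (j - 1) * (pz ((n : ℤ) - (3 * j * (j + 1)) / 2) : ℤ)) -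
        (gePart n : ℤ)) = B0 := by
    rw [hmain]
    have h1 : ∀ S : ℤ, (-1:ℤ) ^ (k-1) * (S - (S + (-1)^k * B0)) =
        ((-1:ℤ) ^ (k-1) * (-1) ^ (k+1)) * B0 := by
      intro S; ring
    rw [h1, ← pow_add, show k - 1 + (k + 1) = 2 * k from by omega, pow_mul]
    norm_num
  constructor
  · rw [hE]
    exact Int.natCast_nonneg _
  · intro hn
    rw [hE, hB0]
    obtain ⟨d, hd⟩ := Nat.even_mul_succ_self (k + 1)
    have hdiv : 3 * (k + 1) * (k + 2) / 2 = 3 * d := by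
      rw [show 3 * (k + 1) * (k + 2) = 2 * (3 * d) from by
        rw [mul_assoc, show (k + 1) * (k + 2) = 2 * d from by
          rw [show k + 2 = (k + 1) + 1 from rfl]; omega]; ring]
      exact Nat.mul_div_cancel_left _ (by norm_num)
    rw [hdiv] at hn
    obtain ⟨c, hc, hcdiv⟩ := half k
    rw [hcdiv]
    have h2 : (k + 1) * ((k + 1) + 1) = 2 * d := by omega
    have h2' : ((k:ℤ) + 1) * (((k:ℤ) + 1) + 1) = 2 * (d : ℤ) := by exact_mod_cast h2
    have hcd : c + ((k:ℤ) + 1) = (d : ℤ) := by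
      have h1 : ((k:ℤ) + 1) * (((k:ℤ) + 1) + 1) = (k:ℤ) * ((k:ℤ) + 1) + 2 * ((k:ℤ) + 1) := by
        ring
      linarith
    have hn' : (3 * (d:ℤ)) ≤ (n : ℤ) := by exact_mod_cast hn
    have h3 : (3 * k + 2) + 1 ≤ ((n:ℤ) - 3 * c).toNat := by omega
    rw [Bz, if_pos (by omega : (0:ℤ) ≤ (n:ℤ) - 3 * c)]
    exact_mod_cast B_pos _ _ h3
end
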